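/- A non-crossing partition pi of {1,...,kn} is k-preserving (every block contains only numbers congruent to each other mod k) if and only if pi is the Kreweras complement of some k-divisible non-crossing partition of {1,...,kn}. -/

import Mathlib

open scoped BigOperators Classical

/-- Partitions of `Fin n` (i.e. of `{1,…,n}`). -/
abbrev NCP (n : ℕ) := Finpartition (Finset.univ : Finset (Fin n))

/-- `x` and `y` lie in the same block of `P`. -/
def pRel {n : ℕ} (P : NCP n) (x y : Fin n) : Prop := ∃ t ∈ P.parts, x ∈ t ∧ y ∈ t

/-- `P` is a non-crossing partition. -/
def IsNonCrossing {n : ℕ} (P : NCP n) : Prop :=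
  ∀ a b c d : Fin n, a < b → b < c → c < d → pRel P a c → pRel P b d → pRel P a b

/-- Every block of `P` has exactly `k` elements (`k`-equal). -/
def IsKEqual (k : ℕ) {n : ℕ} (P : NCP n) : Prop := ∀ t ∈ P.parts, t.card = k

/-- Every block of `P` has size divisible by `k` (`k`-divisible). -/
def IsKDivisible (k : ℕ) {n : ℕ} (P : NCP n) : Prop := ∀ t ∈ P.parts, k ∣ t.card

/-- Every block of `P` contains only numbers of one residue class mod `k`. -/
def IsKPreserving (k : ℕ) {n : ℕ} (P : NCP n) : Prop :=
  ∀ t ∈ P.parts, ∀ x ∈ t, ∀ y ∈ t, (x : ℕ) % k = (y : ℕ) % k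

/-- The relation on `{1,…,2n}` obtained by putting `P` on the odd positions and `Q` on
the even positions (0-indexed: `P` on evens, `Q` on odds). -/
def jointRel {n : ℕ} (P Q : NCP n) (x y : Fin (2 * n)) : Prop :=
  ((x : ℕ) % 2 = 0 ∧ (y : ℕ) % 2 = 0 ∧
      pRel P ⟨(x : ℕ) / 2, by have := x.isLt; omega⟩ ⟨(y : ℕ) / 2, by have := y.isLt; omega⟩) ∨
  ((x : ℕ) % 2 = 1 ∧ (y : ℕ) % 2 = 1 ∧
      pRel Q ⟨(x : ℕ) / 2, by have := x.isLt; omega⟩ ⟨(y : ℕ) / 2, by have := y.isLt; omega⟩)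

/-- A symmetric-relation analogue of non-crossing. -/
def RelNonCrossing {m : ℕ} (R : Fin m → Fin m → Prop) : Prop :=
  ∀ a b c d : Fin m, a < b → b < c → c < d → R a c → R b d → R a b

/-- `Q` is the Kreweras complement of `P`: the union `P ∪ Q` (interleaved) is non-crossing and
`Q` is the largest such partition in the reverse refinement order. -/
def IsKr {n : ℕ} (P Q : NCP n) : Prop :=
  RelNonCrossing (jointRel P Q) ∧ ∀ Q' : NCP n, RelNonCrossing (jointRel P Q') → Q' ≤ Q

namespace Stmt8Aux

variable {m : ℕ}

lemma pRel_of_mem {P : NCP m} {T : Finset (Fin m)} (hT : T ∈ P.parts) {x y : Fin m}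
    (hx : x ∈ T) (hy : y ∈ T) : pRel P x y := ⟨T, hT, hx, hy⟩

lemma mem_of_pRel {P : NCP m} {T : Finset (Fin m)} (hT : T ∈ P.parts) {x y : Fin m}
    (hx : x ∈ T) (h : pRel P x y) : y ∈ T := by
  obtain ⟨S, hS, hxS, hyS⟩ := h
  rwa [P.eq_of_mem_parts hT hS hx hxS]

lemma pRel_refl (P : NCP m) (x : Fin m) : pRel P x x := by
  obtain ⟨t, ht, hx⟩ := P.exists_mem (Finset.mem_univ x)
  exact ⟨t, ht, hx, hx⟩

lemma pRel_symm {P : NCP m} {x y : Fin m} (h : pRel P x y) : pRel P y x := by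
  obtain ⟨t, ht, hx, hy⟩ := h; exact ⟨t, ht, hy, hx⟩

/-- `x` lies in the interval between `a` and `b` (left-closed right-open). -/
def inI (a b x : ℕ) : Prop := (a ≤ x ∧ x < b) ∨ (b ≤ x ∧ x < a)

/-- The inverse-Kreweras relation associated to `P`. -/
def Rrel (P : NCP m) (a b : Fin m) : Prop :=
  ∀ T ∈ P.parts, ∀ x ∈ T, ∀ y ∈ T, inI (a : ℕ) b x → inI (a : ℕ) b y

lemma Rrel_refl (P : NCP m) (a : Fin m) : Rrel P a a := by
  intro T hT x hx y hy hxI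
  simp only [inI] at hxI ⊢; omega

lemma Rrel_symm {P : NCP m} {a b : Fin m} (h : Rrel P a b) : Rrel P b a := by
  intro T hT x hx y hy hxI
  have := h T hT x hx y hy (by simp only [inI] at hxI ⊢; omega)
  simp only [inI] at this ⊢; omega

lemma Rrel_trans {P : NCP m} {a b c : Fin m} (hab : Rrel P a b) (hbc : Rrel P b c) :
    Rrel P a c := by
  intro T hT x hx y hy hxI
  by_contra hyI
  rcases (show inI (a:ℕ) b x ∨ inI (b:ℕ) c x by simp only [inI] at hxI ⊢; omega) with h1 | h1
  · have hyab := hab T hT x hx y hy h1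
    have hybc : inI (b:ℕ) c y := by simp only [inI] at hxI hyI hyab ⊢; omega
    have hxbc := hbc T hT y hy x hx hybc
    simp only [inI] at hxI h1 hxbc; omega
  · have hybc := hbc T hT x hx y hy h1
    have hyab : inI (a:ℕ) b y := by simp only [inI] at hxI hyI hybc ⊢; omega
    have hxab := hab T hT y hy x hx hyab
    simp only [inI] at hxI h1 hxab; omega

def krSetoid (P : NCP m) : Setoid (Fin m) :=
  ⟨Rrel P, ⟨Rrel_refl P, Rrel_symm, Rrel_trans⟩⟩

noncomputable def krInv (P : NCP m) : NCP m := Finpartition.ofSetoid (krSetoid P)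

lemma pRel_krInv {P : NCP m} {x y : Fin m} : pRel (krInv P) x y ↔ Rrel P x y := by
  constructor
  · rintro ⟨t, ht, hx, hy⟩
    have h1 : (krInv P).part x = t := Finpartition.part_eq_of_mem _ ht hx
    have h2 : y ∈ (krInv P).part x := h1 ▸ hy
    exact Finpartition.mem_part_ofSetoid_iff_rel.mp h2
  · intro h
    exact ⟨(krInv P).part x, (krInv P).part_mem.mpr (Finset.mem_univ x),
      (krInv P).mem_part (Finset.mem_univ x),
      Finpartition.mem_part_ofSetoid_iff_rel.mpr h⟩

lemma mkdiv_even (w : Fin m) (h2 : 2*(w:ℕ) < 2*m)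
    (h' : ((⟨2*(w:ℕ), h2⟩ : Fin (2*m)) : ℕ) / 2 < m) :
    (⟨((⟨2*(w:ℕ), h2⟩ : Fin (2*m)) : ℕ) / 2, h'⟩ : Fin m) = w :=
  Fin.ext (show 2*(w:ℕ)/2 = (w:ℕ) by omega)

lemma mkdiv_odd (w : Fin m) (h2 : 2*(w:ℕ)+1 < 2*m)
    (h' : ((⟨2*(w:ℕ)+1, h2⟩ : Fin (2*m)) : ℕ) / 2 < m) :
    (⟨((⟨2*(w:ℕ)+1, h2⟩ : Fin (2*m)) : ℕ) / 2, h'⟩ : Fin m) = w :=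
  Fin.ext (show (2*(w:ℕ)+1)/2 = (w:ℕ) by omega)

lemma parity_eq {Q P' : NCP m} {a b : Fin (2*m)} (hab : jointRel Q P' a b) :
    (a:ℕ) % 2 = (b:ℕ) % 2 := by
  rcases hab with ⟨e1, e2, -⟩ | ⟨e1, e2, -⟩ <;> omega

lemma lemA {Q P' : NCP m} (h : RelNonCrossing (jointRel Q P'))
    {x y : Fin m} (hxy : (x:ℕ) < y) (hrel : pRel P' x y)
    {S : Finset (Fin m)} (hS : S ∈ Q.parts) {u v : Fin m} (hu : u ∈ S) (hv : v ∈ S)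
    (hux : (x:ℕ) < u) (huy : (u:ℕ) ≤ y) : (x:ℕ) < v ∧ (v:ℕ) ≤ y := by
  have hym : (y:ℕ) < m := y.isLt
  have hum : (u:ℕ) < m := u.isLt
  have hvm : (v:ℕ) < m := v.isLt
  by_contra hcon
  push_neg at hcon
  rcases le_or_gt (v:ℕ) (x:ℕ) with hvx | hxv
  · have := h ⟨2*v, by omega⟩ ⟨2*x+1, by omega⟩ ⟨2*u, by omega⟩ ⟨2*y+1, by omega⟩
      (show 2*(v:ℕ) < 2*(x:ℕ)+1 by omega) (show 2*(x:ℕ)+1 < 2*(u:ℕ) by omega)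
      (show 2*(u:ℕ) < 2*(y:ℕ)+1 by omega)
      (Or.inl ⟨show 2*(v:ℕ) % 2 = 0 by omega, show 2*(u:ℕ) % 2 = 0 by omega, by
        rw [mkdiv_even v, mkdiv_even u]; exact pRel_of_mem hS hv hu⟩)
      (Or.inr ⟨show (2*(x:ℕ)+1) % 2 = 1 by omega, show (2*(y:ℕ)+1) % 2 = 1 by omega, by
        rw [mkdiv_odd x, mkdiv_odd y]; exact hrel⟩)
    have hp := parity_eq this
    exact absurd hp (show ¬ 2*(v:ℕ) % 2 = (2*(x:ℕ)+1) % 2 by omega)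
  · have hyv : (y:ℕ) < v := hcon hxv
    have := h ⟨2*x+1, by omega⟩ ⟨2*u, by omega⟩ ⟨2*y+1, by omega⟩ ⟨2*v, by omega⟩
      (show 2*(x:ℕ)+1 < 2*(u:ℕ) by omega) (show 2*(u:ℕ) < 2*(y:ℕ)+1 by omega)
      (show 2*(y:ℕ)+1 < 2*(v:ℕ) by omega)
      (Or.inr ⟨show (2*(x:ℕ)+1) % 2 = 1 by omega, show (2*(y:ℕ)+1) % 2 = 1 by omega, by
        rw [mkdiv_odd x, mkdiv_odd y]; exact hrel⟩)
      (Or.inl ⟨show 2*(u:ℕ) % 2 = 0 by omega, show 2*(v:ℕ) % 2 = 0 by omega, by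
        rw [mkdiv_even u, mkdiv_even v]; exact pRel_of_mem hS hu hv⟩)
    have hp := parity_eq this
    exact absurd hp (show ¬ (2*(x:ℕ)+1) % 2 = 2*(u:ℕ) % 2 by omega)


lemma block_eq_of_mem {Q : NCP m} {S T : Finset (Fin m)} (hS : S ∈ Q.parts)
    (hT : T ∈ Q.parts) {z : Fin m} (hzS : z ∈ S) (hzT : z ∈ T) : S = T :=
  Q.eq_of_mem_parts hS hT hzS hzT

/-- If `g, h` lie in a block `B` of a non-crossing `Q` and some other block `S` has an
element strictly between `g` and `h`, then all of `S` lies strictly between them. -/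
lemma lemG {Q : NCP m} (hQ : IsNonCrossing Q) {B S : Finset (Fin m)}
    (hB : B ∈ Q.parts) (hS : S ∈ Q.parts) (hne : S ≠ B)
    {g h v w : Fin m} (hg : g ∈ B) (hh : h ∈ B) (hv : v ∈ S) (hw : w ∈ S)
    (h1 : (g:ℕ) < v) (h2 : (v:ℕ) < h) : (g:ℕ) < w ∧ (w:ℕ) < h := by
  constructor
  · by_contra hle
    push_neg at hle
    rcases eq_or_lt_of_le hle with he | hlt
    · exact hne (block_eq_of_mem hS hB hw ((Fin.ext he : w = g) ▸ hg))
    · have hcr := hQ w g v h (show (w:ℕ) < g from hlt) (show (g:ℕ) < v from h1)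
        (show (v:ℕ) < h from h2) (pRel_of_mem hS hw hv) (pRel_of_mem hB hg hh)
      obtain ⟨T', hT', hwT', hgT'⟩ := hcr
      exact hne ((block_eq_of_mem hS hT' hw hwT').trans (block_eq_of_mem hT' hB hgT' hg))
  · by_contra hle
    push_neg at hle
    rcases eq_or_lt_of_le hle with he | hlt
    · exact hne (block_eq_of_mem hS hB hw ((Fin.ext he.symm : w = h) ▸ hh))
    · have hcr := hQ g v h w (show (g:ℕ) < v from h1) (show (v:ℕ) < h from h2)
        (show (h:ℕ) < w from hlt) (pRel_of_mem hB hg hh) (pRel_of_mem hS hv hw)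
      obtain ⟨T', hT', hgT', hvT'⟩ := hcr
      exact hne ((block_eq_of_mem hS hT' hv hvT').trans (block_eq_of_mem hT' hB hgT' hg))

lemma krInv_nc {P : NCP m} : IsNonCrossing (krInv P) := by
  intro a b c d hab hbc hcd hac hbd
  rw [pRel_krInv] at hac hbd ⊢
  have hab' : (a:ℕ) < b := hab
  have hbc' : (b:ℕ) < c := hbc
  have hcd' : (c:ℕ) < d := hcd
  intro T hT x hx y hy hxI
  have hxab : (a:ℕ) ≤ x ∧ (x:ℕ) < b := by simp only [inI] at hxI; omega
  have hxac : inI (a:ℕ) c x := by simp only [inI]; omega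
  have hyac := hac T hT x hx y hy hxac
  by_contra hyI
  have hybd : inI (b:ℕ) d y := by simp only [inI] at hyac hyI ⊢; omega
  have hxbd := hbd T hT y hy x hx hybd
  simp only [inI] at hxbd ⊢; omega

/-- The key "double complement" lemma: if the interval `(p,q]` is closed under the
relation `Rrel P`, then `p` and `q` lie in the same block of `P`. -/
lemma key {P : NCP m} (hP : IsNonCrossing P) {p q : Fin m} (hpq : (p:ℕ) < q)
    (H : ∀ x y : Fin m, Rrel P x y → ((p:ℕ) < (x:ℕ) ∧ (x:ℕ) ≤ (q:ℕ)) →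
      ((p:ℕ) < (y:ℕ) ∧ (y:ℕ) ≤ (q:ℕ))) :
    pRel P p q := by
  have hqm : (q:ℕ) < m := q.isLt
  obtain ⟨T, hT, hpT⟩ := P.exists_mem (Finset.mem_univ p)
  set F : Finset (Fin m) := T.filter (fun z => (z:ℕ) ≤ (q:ℕ)) with hFdef
  have hpF : p ∈ F := Finset.mem_filter.mpr ⟨hpT, hpq.le⟩
  set t : Fin m := F.max' ⟨p, hpF⟩ with htdef
  have htF : t ∈ F := F.max'_mem _
  have htT : t ∈ T := (Finset.mem_filter.mp htF).1
  have htq : (t:ℕ) ≤ q := (Finset.mem_filter.mp htF).2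
  have hpt : (p:ℕ) ≤ t := F.le_max' p hpF
  have hFmax : ∀ z ∈ T, (z:ℕ) ≤ q → (z:ℕ) ≤ t :=
    fun z hz hzq => F.le_max' z (Finset.mem_filter.mpr ⟨hz, hzq⟩)
  rcases eq_or_lt_of_le htq with he | htq'
  · exact ⟨T, hT, hpT, (Fin.ext he : t = q) ▸ htT⟩
  · -- t < q
    set xx : Fin m := ⟨(t:ℕ)+1, by omega⟩ with hxxdef
    have hxxv : (xx:ℕ) = (t:ℕ)+1 := rfl
    set G : Finset (Fin m) := T.filter (fun z => (q:ℕ) < (z:ℕ)) with hGdef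
    by_cases hG : G.Nonempty
    · set y : Fin m := G.min' hG with hydef
      have hyG : y ∈ G := G.min'_mem _
      have hyT : y ∈ T := (Finset.mem_filter.mp hyG).1
      have hqy : (q:ℕ) < y := (Finset.mem_filter.mp hyG).2
      have hGmin : ∀ z ∈ T, (q:ℕ) < z → (y:ℕ) ≤ z :=
        fun z hz hzq => G.min'_le z (Finset.mem_filter.mpr ⟨hz, hzq⟩)
      have hR : Rrel P xx y := by
        intro S hS u hu v hv huI
        have hu1 : (t:ℕ)+1 ≤ u ∧ (u:ℕ) < y := by simp only [inI] at huI; omega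
        have hSneT : S ≠ T := by
          intro hST
          subst hST
          by_cases huq : (u:ℕ) ≤ q
          · have := hFmax u hu huq; omega
          · have := hGmin u hu (by omega); omega
        by_contra hvI
        have hv1 : (v:ℕ) ≤ t ∨ (y:ℕ) ≤ v := by simp only [inI] at hvI; omega
        rcases hv1 with hv1 | hv1
        · rcases eq_or_lt_of_le hv1 with he2 | hlt2
          · exact hSneT (block_eq_of_mem hS hT hv ((Fin.ext he2 : v = t) ▸ htT))
          · have hcr := hP v t u y (show (v:ℕ) < t from hlt2) (show (t:ℕ) < u by omega)
              (show (u:ℕ) < y from hu1.2) (pRel_of_mem hS hv hu) (pRel_of_mem hT htT hyT)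
            obtain ⟨T', hT', h1', h2'⟩ := hcr
            exact hSneT ((block_eq_of_mem hS hT' hv h1').trans
              (block_eq_of_mem hT' hT h2' htT))
        · rcases eq_or_lt_of_le hv1 with he2 | hlt2
          · exact hSneT (block_eq_of_mem hS hT hv ((Fin.ext he2.symm : v = y) ▸ hyT))
          · have hcr := hP t u y v (show (t:ℕ) < u by omega) (show (u:ℕ) < y from hu1.2)
              (show (y:ℕ) < v from hlt2) (pRel_of_mem hT htT hyT) (pRel_of_mem hS hu hv)
            obtain ⟨T', hT', h1', h2'⟩ := hcr
            exact hSneT ((block_eq_of_mem hS hT' hu h2').trans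
              (block_eq_of_mem hT' hT h1' htT))
      have := H xx y hR ⟨by show (p:ℕ) < (t:ℕ)+1; omega, by show (t:ℕ)+1 ≤ q; omega⟩
      omega
    · have hallq : ∀ z ∈ T, (z:ℕ) ≤ q := by
        intro z hz
        by_contra hzq
        exact hG ⟨z, Finset.mem_filter.mpr ⟨hz, by omega⟩⟩
      have hallt : ∀ z ∈ T, (z:ℕ) ≤ t := fun z hz => hFmax z hz (hallq z hz)
      set r : Fin m := T.min' ⟨p, hpT⟩ with hrdef
      have hrT : r ∈ T := T.min'_mem _
      have hrp : (r:ℕ) ≤ p := T.min'_le p hpT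
      have hrmin : ∀ z ∈ T, (r:ℕ) ≤ z := fun z hz => T.min'_le z hz
      have hR : Rrel P xx r := by
        intro S hS u hu v hv huI
        have hu1 : (r:ℕ) ≤ u ∧ (u:ℕ) ≤ t := by simp only [inI] at huI; omega
        by_cases hST : S = T
        · subst hST
          have := hrmin v hv
          have := hallt v hv
          simp only [inI]; omega
        · have hur : (u:ℕ) ≠ r := fun he =>
            hST (block_eq_of_mem hS hT hu ((Fin.ext he : u = r) ▸ hrT))
          have hut : (u:ℕ) ≠ t := fun he =>
            hST (block_eq_of_mem hS hT hu ((Fin.ext he : u = t) ▸ htT))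
          by_contra hvI
          have hv1 : (v:ℕ) < r ∨ (t:ℕ) < v := by simp only [inI] at hvI; omega
          rcases hv1 with hv1 | hv1
          · have hcr := hP v r u t (show (v:ℕ) < r from hv1) (show (r:ℕ) < u by omega)
              (show (u:ℕ) < t by omega) (pRel_of_mem hS hv hu) (pRel_of_mem hT hrT htT)
            obtain ⟨T', hT', h1', h2'⟩ := hcr
            exact hST ((block_eq_of_mem hS hT' hv h1').trans
              (block_eq_of_mem hT' hT h2' hrT))
          · have hcr := hP r u t v (show (r:ℕ) < u by omega) (show (u:ℕ) < t by omega)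
              (show (t:ℕ) < v from hv1) (pRel_of_mem hT hrT htT) (pRel_of_mem hS hu hv)
            obtain ⟨T', hT', h1', h2'⟩ := hcr
            exact hST ((block_eq_of_mem hS hT' hu h2').trans
              (block_eq_of_mem hT' hT h1' hrT))
      have := H xx r hR ⟨by show (p:ℕ) < (t:ℕ)+1; omega, by show (t:ℕ)+1 ≤ q; omega⟩
      omega


lemma joint_nc {P : NCP m} (hP : IsNonCrossing P) :
    RelNonCrossing (jointRel (krInv P) P) := by
  intro a b c d hab hbc hcd hac hbd
  have hab' : (a:ℕ) < b := hab
  have hbc' : (b:ℕ) < c := hbc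
  have hcd' : (c:ℕ) < d := hcd
  have ham := a.isLt
  have hbm := b.isLt
  have hcm := c.isLt
  have hdm := d.isLt
  rcases hac with ⟨ha, hc, hQac⟩ | ⟨ha, hc, hPac⟩ <;>
    rcases hbd with ⟨hb, hd, hQbd⟩ | ⟨hb, hd, hPbd⟩
  · exact Or.inl ⟨ha, hb, krInv_nc _ _ _ _ (show (a:ℕ)/2 < (b:ℕ)/2 by omega)
      (show (b:ℕ)/2 < (c:ℕ)/2 by omega) (show (c:ℕ)/2 < (d:ℕ)/2 by omega) hQac hQbd⟩
  · exfalso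
    have hR := pRel_krInv.mp hQac
    obtain ⟨T, hT, h1, h2⟩ := hPbd
    have hres := hR T hT _ h1 _ h2
      (show inI ((a:ℕ)/2) ((c:ℕ)/2) ((b:ℕ)/2) by simp only [inI]; omega)
    have hres' : inI ((a:ℕ)/2) ((c:ℕ)/2) ((d:ℕ)/2) := hres
    simp only [inI] at hres'; omega
  · exfalso
    have hR := pRel_krInv.mp hQbd
    obtain ⟨T, hT, h1, h2⟩ := hPac
    have hres := hR T hT _ h2 _ h1
      (show inI ((b:ℕ)/2) ((d:ℕ)/2) ((c:ℕ)/2) by simp only [inI]; omega)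
    have hres' : inI ((b:ℕ)/2) ((d:ℕ)/2) ((a:ℕ)/2) := hres
    simp only [inI] at hres'; omega
  · exact Or.inr ⟨ha, hb, hP _ _ _ _ (show (a:ℕ)/2 < (b:ℕ)/2 by omega)
      (show (b:ℕ)/2 < (c:ℕ)/2 by omega) (show (c:ℕ)/2 < (d:ℕ)/2 by omega) hPac hPbd⟩

lemma maximal {P : NCP m} (hP : IsNonCrossing P) (Q' : NCP m)
    (h : RelNonCrossing (jointRel (krInv P) Q')) : Q' ≤ P := by
  have main : ∀ x y : Fin m, (x:ℕ) < y → pRel Q' x y → pRel P x y := by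
    intro x y hxy hrel
    apply key hP hxy
    intro u v huv hu
    obtain ⟨S, hS, huS, hvS⟩ := pRel_krInv.mpr huv
    exact lemA h hxy hrel hS huS hvS hu.1 hu.2
  intro t ht
  obtain ⟨x₀, hx₀⟩ := Q'.nonempty_of_mem_parts ht
  obtain ⟨u, hu, hx₀u⟩ := P.exists_mem (Finset.mem_univ x₀)
  refine ⟨u, hu, ?_⟩
  intro z hz
  rcases lt_trichotomy ((x₀:ℕ)) ((z:ℕ)) with hlt | heq | hgt
  · exact mem_of_pRel hu hx₀u (main x₀ z hlt (pRel_of_mem ht hx₀ hz))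
  · exact (Fin.ext heq : x₀ = z) ▸ hx₀u
  · exact mem_of_pRel hu hx₀u (pRel_symm (main z x₀ hgt (pRel_of_mem ht hz hx₀)))

lemma backward {k : ℕ} {Q P : NCP m} (hjoint : RelNonCrossing (jointRel Q P))
    (hQdiv : IsKDivisible k Q) : IsKPreserving k P := by
  have main : ∀ x y : Fin m, (x:ℕ) < y → pRel P x y → (x:ℕ) % k = (y:ℕ) % k := by
    intro x y hxy hrel
    set J : Finset (Fin m) := Finset.Ioc x y with hJdef
    have hmemJ : ∀ z : Fin m, z ∈ J ↔ (x:ℕ) < z ∧ (z:ℕ) ≤ y := by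
      intro z
      rw [hJdef, Finset.mem_Ioc]
      exact ⟨fun h => ⟨h.1, h.2⟩, fun h => ⟨h.1, h.2⟩⟩
    set Pc : Finset (Finset (Fin m)) := Q.parts.filter (fun S => S ⊆ J) with hPcdef
    have hJ : J = Pc.biUnion id := by
      ext z
      simp only [Finset.mem_biUnion, Finset.mem_filter, id, hPcdef]
      constructor
      · intro hz
        obtain ⟨S, hS, hzS⟩ := Q.exists_mem (Finset.mem_univ z)
        have hz' := (hmemJ z).mp hz
        refine ⟨S, ⟨hS, fun w hw => (hmemJ w).mpr ?_⟩, hzS⟩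
        exact lemA hjoint hxy hrel hS hzS hw hz'.1 hz'.2
      · rintro ⟨S, ⟨hS, hsub⟩, hzS⟩
        exact hsub hzS
    have hdisj : ∀ S ∈ Pc, ∀ S' ∈ Pc, S ≠ S' → Disjoint S S' := by
      intro S hS S' hS' hne
      exact Q.disjoint (Finset.mem_coe.mpr (Finset.mem_filter.mp hS).1)
        (Finset.mem_coe.mpr (Finset.mem_filter.mp hS').1) hne
    have hcard : J.card = ∑ S ∈ Pc, S.card := by
      rw [hJ]
      exact Finset.card_biUnion hdisj
    have hkd : k ∣ J.card := by
      rw [hcard]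
      exact Finset.dvd_sum fun S hS => hQdiv S (Finset.mem_filter.mp hS).1
    have hcardJ : J.card = (y:ℕ) - x := by rw [hJdef, Fin.card_Ioc]
    rw [hcardJ] at hkd
    exact (Nat.modEq_iff_dvd' hxy.le).mpr hkd
  intro T hT x hx y hy
  rcases lt_trichotomy ((x:ℕ)) ((y:ℕ)) with hlt | heq | hgt
  · exact main x y hlt ⟨T, hT, hx, hy⟩
  · rw [heq]
  · exact (main y x hgt ⟨T, hT, hy, hx⟩).symm


lemma krInv_kdiv {k n : ℕ} (hk : 0 < k) (hn : 0 < n) {P : NCP (k*n)} (hP : IsNonCrossing P)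
    (hpres : IsKPreserving k P) : IsKDivisible k (krInv P) := by
  have hm0 : 0 < k * n := Nat.mul_pos hk hn
  have hQnc : IsNonCrossing (krInv P) := krInv_nc
  intro B hB
  have hs0 : 0 < B.card := Finset.card_pos.mpr ((krInv P).nonempty_of_mem_parts hB)
  set s := B.card with hsdef
  set b : Fin s ≃o {z : Fin (k*n) // z ∈ B} := B.orderIsoOfFin hsdef.symm with hbdef
  have hmem : ∀ i : Fin s, ((b i : Fin (k*n))) ∈ B := fun i => (b i).2
  have hmono : ∀ i j : Fin s, (i:ℕ) < (j:ℕ) →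
      (((b i : Fin (k*n))):ℕ) < ((b j : Fin (k*n)):ℕ) := by
    intro i j hij
    exact b.strictMono (show (i:ℕ) < (j:ℕ) from hij)
  have hmono' : ∀ i j : Fin s, (i:ℕ) ≤ (j:ℕ) →
      (((b i : Fin (k*n))):ℕ) ≤ ((b j : Fin (k*n)):ℕ) := by
    intro i j hij
    exact b.monotone (show (i:ℕ) ≤ (j:ℕ) from hij)
  have hsurj : ∀ z ∈ B, ∃ i : Fin s, (b i : Fin (k*n)) = z :=
    fun z hz => ⟨b.symm ⟨z, hz⟩, by simp⟩
  -- no element of B strictly between consecutive elements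
  have hgap0 : ∀ (i1 i2 : Fin s), (i1:ℕ)+1 = (i2:ℕ) → ∀ z ∈ B,
      ¬(((b i1 : Fin (k*n)):ℕ) < (z:ℕ) ∧ (z:ℕ) < ((b i2 : Fin (k*n)):ℕ)) := by
    intro i1 i2 hsucc z hz hcon
    obtain ⟨i, rfl⟩ := hsurj z hz
    have hiv := i.isLt
    have h1 : (i1:ℕ) < (i:ℕ) := by
      by_contra hni
      push_neg at hni
      have := hmono' i i1 hni
      omega
    have h2 : (i:ℕ) < (i2:ℕ) := by
      by_contra hni
      push_neg at hni
      have := hmono' i2 i hni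
      omega
    omega
  -- the congruence step between consecutive elements
  have gap : ∀ (i1 i2 : Fin s), (i1:ℕ)+1 = (i2:ℕ) →
      ((b i2 : Fin (k*n)):ℕ) % k = (((b i1 : Fin (k*n)):ℕ)+1) % k := by
    intro i1 i2 hsucc
    have hlt : ((b i1 : Fin (k*n)):ℕ) < ((b i2 : Fin (k*n)):ℕ) := hmono i1 i2 (by omega)
    have him := (b i2 : Fin (k*n)).isLt
    rcases eq_or_lt_of_le (show ((b i1 : Fin (k*n)):ℕ)+1 ≤ ((b i2 : Fin (k*n)):ℕ) from hlt)
      with he | hlt2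
    · rw [← he]
    · have hprel : pRel P (b i1 : Fin (k*n)) ⟨((b i2 : Fin (k*n)):ℕ)-1, by omega⟩ := by
        apply key hP
          (show ((b i1 : Fin (k*n)):ℕ) < ((b i2 : Fin (k*n)):ℕ)-1 by omega)
        intro u v huv hu
        have hu1 : ((b i1 : Fin (k*n)):ℕ) < (u:ℕ) := hu.1
        have hu2 : (u:ℕ) ≤ ((b i2 : Fin (k*n)):ℕ)-1 := hu.2
        obtain ⟨S, hS, huS, hvS⟩ := pRel_krInv.mpr huv
        have hSB : S ≠ B := by
          intro he2
          subst he2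
          exact hgap0 i1 i2 hsucc u huS ⟨hu1, by omega⟩
        have hg := lemG hQnc hB hS hSB (hmem i1) (hmem i2) huS hvS hu1 (by omega)
        exact ⟨show ((b i1 : Fin (k*n)):ℕ) < (v:ℕ) from hg.1,
          show (v:ℕ) ≤ ((b i2 : Fin (k*n)):ℕ)-1 by omega⟩
      obtain ⟨T, hT, e1, e2⟩ := hprel
      have hmod : ((b i1 : Fin (k*n)):ℕ) % k = (((b i2 : Fin (k*n)):ℕ)-1) % k :=
        hpres T hT _ e1 _ e2
      have h2 : (((b i1 : Fin (k*n)):ℕ)+1) % k = ((((b i2 : Fin (k*n)):ℕ)-1)+1) % k :=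
        Nat.ModEq.add_right 1 hmod
      rw [show (((b i2 : Fin (k*n)):ℕ)-1)+1 = ((b i2 : Fin (k*n)):ℕ) by omega] at h2
      exact h2.symm
  have chain : ∀ (j : ℕ) (hj : j < s),
      ((b ⟨j, hj⟩ : Fin (k*n)):ℕ) % k = (((b ⟨0, hs0⟩ : Fin (k*n)):ℕ) + j) % k := by
    intro j
    induction j with
    | zero => intro hj; rfl
    | succ i ih =>
      intro hj
      have h1 := gap ⟨i, by omega⟩ ⟨i+1, hj⟩ rfl
      have h2 := ih (by omega)
      exact h1.trans (show (((b ⟨i, by omega⟩ : Fin (k*n)):ℕ)+1) % k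
        = (((b ⟨0, hs0⟩ : Fin (k*n)):ℕ) + (i+1)) % k from Nat.ModEq.add_right 1 h2)
  have hlast : s - 1 < s := by omega
  have hb0B : (b ⟨0, hs0⟩ : Fin (k*n)) ∈ B := hmem _
  have hblB : (b ⟨s-1, hlast⟩ : Fin (k*n)) ∈ B := hmem _
  have hchain := chain (s-1) hlast
  have hmax : ∀ z ∈ B, (z:ℕ) ≤ ((b ⟨s-1, hlast⟩ : Fin (k*n)):ℕ) := by
    intro z hz
    obtain ⟨i, rfl⟩ := hsurj z hz
    have hiv := i.isLt
    exact hmono' i ⟨s-1, hlast⟩ (by show (i:ℕ) ≤ s-1; omega)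
  have hmin : ∀ z ∈ B, ((b ⟨0, hs0⟩ : Fin (k*n)):ℕ) ≤ (z:ℕ) := by
    intro z hz
    obtain ⟨i, rfl⟩ := hsurj z hz
    exact hmono' ⟨0, hs0⟩ i (by show (0:ℕ) ≤ (i:ℕ); omega)
  rcases Nat.eq_zero_or_pos ((b ⟨0, hs0⟩ : Fin (k*n)):ℕ) with h0 | h0
  · -- first element is 0 : use the top interval
    have hsm : s ≤ k*n := by
      have h1 := Finset.card_le_univ B
      rw [Fintype.card_fin] at h1
      omega
    have hblm := (b ⟨s-1, hlast⟩ : Fin (k*n)).isLt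
    have hml : ((b ⟨s-1, hlast⟩ : Fin (k*n)):ℕ) % k = (k*n - 1) % k := by
      rcases eq_or_lt_of_le (show ((b ⟨s-1, hlast⟩ : Fin (k*n)):ℕ) ≤ k*n-1 by omega)
        with he | hlt
      · rw [he]
      · have hprel : pRel P (b ⟨s-1, hlast⟩ : Fin (k*n)) ⟨k*n - 1, by omega⟩ := by
          apply key hP (show ((b ⟨s-1, hlast⟩ : Fin (k*n)):ℕ) < k*n-1 from hlt)
          intro u v huv hu
          have hu1 : ((b ⟨s-1, hlast⟩ : Fin (k*n)):ℕ) < (u:ℕ) := hu.1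
          have hvm := v.isLt
          obtain ⟨S, hS, huS, hvS⟩ := pRel_krInv.mpr huv
          refine ⟨?_, show (v:ℕ) ≤ k*n-1 by omega⟩
          by_contra hvle
          push_neg at hvle
          have hSB : S ≠ B := by
            intro he2
            subst he2
            exact absurd (hmax u huS) (by omega)
          have hvne : (v:ℕ) ≠ ((b ⟨s-1, hlast⟩ : Fin (k*n)):ℕ) := fun he2 =>
            hSB (block_eq_of_mem hS hB hvS
              ((Fin.ext he2 : v = (b ⟨s-1, hlast⟩ : Fin (k*n))) ▸ hblB))
          have hvne0 : (v:ℕ) ≠ ((b ⟨0, hs0⟩ : Fin (k*n)):ℕ) := fun he2 =>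
            hSB (block_eq_of_mem hS hB hvS
              ((Fin.ext he2 : v = (b ⟨0, hs0⟩ : Fin (k*n))) ▸ hb0B))
          have hg := lemG hQnc hB hS hSB hb0B hblB hvS huS
            (show ((b ⟨0, hs0⟩ : Fin (k*n)):ℕ) < (v:ℕ) by omega)
            (show (v:ℕ) < ((b ⟨s-1, hlast⟩ : Fin (k*n)):ℕ) by omega)
          omega
        obtain ⟨T, hT, e1, e2⟩ := hprel
        exact hpres T hT _ e1 _ e2
    have h1 : (s-1) % k = (k*n-1) % k := by
      rw [h0, Nat.zero_add] at hchain
      exact hchain.symm.trans hml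
    have hd : k ∣ k*n - s := by
      have h2 := (Nat.modEq_iff_dvd' (show s-1 ≤ k*n-1 by omega)).mp h1
      rwa [show k*n-1-(s-1) = k*n - s by omega] at h2
    have hkm : k ∣ k*n := Dvd.intro n rfl
    have h3 := Nat.dvd_sub hkm hd
    rwa [show k*n - (k*n - s) = s by omega] at h3
  · -- first element positive : use the wrap-around interval
    have hb0bl := hmin _ hblB
    have hprel : pRel P ⟨((b ⟨0, hs0⟩ : Fin (k*n)):ℕ)-1,
        by have := (b ⟨0, hs0⟩ : Fin (k*n)).isLt; omega⟩ (b ⟨s-1, hlast⟩ : Fin (k*n)) := by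
      apply key hP
        (show ((b ⟨0, hs0⟩ : Fin (k*n)):ℕ)-1 < ((b ⟨s-1, hlast⟩ : Fin (k*n)):ℕ) by omega)
      intro u v huv hu
      have hu1 : ((b ⟨0, hs0⟩ : Fin (k*n)):ℕ)-1 < (u:ℕ) := hu.1
      have hu2 : (u:ℕ) ≤ ((b ⟨s-1, hlast⟩ : Fin (k*n)):ℕ) := hu.2
      obtain ⟨S, hS, huS, hvS⟩ := pRel_krInv.mpr huv
      by_cases hSB : S = B
      · subst hSB
        have hv1 := hmin v hvS
        have hv2 := hmax v hvS
        exact ⟨show ((b ⟨0, hs0⟩ : Fin (k*n)):ℕ)-1 < (v:ℕ) by omega,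
          show (v:ℕ) ≤ ((b ⟨s-1, hlast⟩ : Fin (k*n)):ℕ) from hv2⟩
      · have hune1 : (u:ℕ) ≠ ((b ⟨0, hs0⟩ : Fin (k*n)):ℕ) := fun he2 =>
          hSB (block_eq_of_mem hS hB huS
            ((Fin.ext he2 : u = (b ⟨0, hs0⟩ : Fin (k*n))) ▸ hb0B))
        have hune2 : (u:ℕ) ≠ ((b ⟨s-1, hlast⟩ : Fin (k*n)):ℕ) := fun he2 =>
          hSB (block_eq_of_mem hS hB huS
            ((Fin.ext he2 : u = (b ⟨s-1, hlast⟩ : Fin (k*n))) ▸ hblB))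
        have hg := lemG hQnc hB hS hSB hb0B hblB huS hvS
          (show ((b ⟨0, hs0⟩ : Fin (k*n)):ℕ) < (u:ℕ) by omega)
          (show (u:ℕ) < ((b ⟨s-1, hlast⟩ : Fin (k*n)):ℕ) by omega)
        exact ⟨show ((b ⟨0, hs0⟩ : Fin (k*n)):ℕ)-1 < (v:ℕ) by omega,
          show (v:ℕ) ≤ ((b ⟨s-1, hlast⟩ : Fin (k*n)):ℕ) by omega⟩
    obtain ⟨T, hT, e1, e2⟩ := hprel
    have hmod : (((b ⟨0, hs0⟩ : Fin (k*n)):ℕ)-1) % k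
        = ((b ⟨s-1, hlast⟩ : Fin (k*n)):ℕ) % k := hpres T hT _ e1 _ e2
    have h1 : (((b ⟨0, hs0⟩ : Fin (k*n)):ℕ)-1) % k
        = (((b ⟨0, hs0⟩ : Fin (k*n)):ℕ) + (s-1)) % k := hmod.trans hchain
    have h2 := (Nat.modEq_iff_dvd'
      (show ((b ⟨0, hs0⟩ : Fin (k*n)):ℕ)-1 ≤ ((b ⟨0, hs0⟩ : Fin (k*n)):ℕ)+(s-1) by omega)).mp h1
    rwa [show ((b ⟨0, hs0⟩ : Fin (k*n)):ℕ)+(s-1)-(((b ⟨0, hs0⟩ : Fin (k*n)):ℕ)-1) = s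
      by omega] at h2

end Stmt8Aux

/-- A non-crossing partition of `{1,…,kn}` is `k`-preserving if and only if it is the Kreweras
complement of some `k`-divisible non-crossing partition. -/
theorem stmt8 (k n : ℕ) (hk : 0 < k) (hn : 0 < n) (P : NCP (k * n))
    (hP : IsNonCrossing P) :
    IsKPreserving k P ↔
      ∃ Q : NCP (k * n), IsNonCrossing Q ∧ IsKDivisible k Q ∧ IsKr Q P := by
  constructor
  · intro hpres
    exact ⟨Stmt8Aux.krInv P, Stmt8Aux.krInv_nc, Stmt8Aux.krInv_kdiv hk hn hP hpres,
      Stmt8Aux.joint_nc hP, fun Q' h => Stmt8Aux.maximal hP Q' h⟩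
  · rintro ⟨Q, hQnc, hQdiv, hjoint, -⟩
    exact Stmt8Aux.backward hjoint hQdiv
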